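/- Let 1 ≤ n ≤ r. For every i with n+1 ≤ i ≤ r, one has P_n·w̃_n·P_n ∩ Ω_{w̃_i} = ∅. Consequently, for every i with n+1 ≤ i ≤ r, every f ∈ C_c^∞(Ω_{w̃_i},ω), every m ≥ 1 and every g ∈ P_n·w̃_n·P_n, B_m(g,f) = 0. -/

import Mathlib

open Matrix MeasureTheory
open scoped BigOperators Classical

noncomputable section

/-- Square matrices of size `2r+1` with entries in `E`; elements of the ambient space of
`U_{2r+1}`. -/
abbrev Mat (E : Type) [Field E] (r : ℕ) : Type := Matrix (Fin (2*r+1)) (Fin (2*r+1)) E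

section Defs

variable {E : Type} [Field E]

/-- The matrix `J_k` with `1`'s on the antidiagonal and `0`'s elsewhere. -/
def Jmat (E : Type) [Field E] (k : ℕ) : Matrix (Fin k) (Fin k) E :=
  fun i j => if (i : ℕ) + (j : ℕ) + 1 = k then 1 else 0

/-- Entrywise application of the Galois conjugation `σ`. -/
def mconj (σ : E ≃+* E) {k : ℕ} (M : Matrix (Fin k) (Fin k) E) : Matrix (Fin k) (Fin k) E :=
  fun i j => σ (M i j)

/-- Membership in the quasi-split unitary group `U_k = {g ∈ GL_k(E) : ᵗḡ J_k g = J_k}`. -/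
def inU (σ : E ≃+* E) {k : ℕ} (g : Matrix (Fin k) (Fin k) E) : Prop :=
  (mconj σ g)ᵀ * Jmat E k * g = Jmat E k ∧ IsUnit g

/-- The unitary group `G = U_{2r+1}` as a subset of the matrix space. -/
def Uset (σ : E ≃+* E) (r : ℕ) : Set (Mat E r) := {g | inU σ g}

/-- The position `i` (0-based) inside `Fin (2r+1)`, for `i : Fin r`. -/
def pL {r : ℕ} (i : Fin r) : Fin (2*r+1) := ⟨(i : ℕ), by have := i.isLt; omega⟩

/-- The position `i+1` (0-based) inside `Fin (2r+1)`, for `i : Fin r`. -/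
def pR {r : ℕ} (i : Fin r) : Fin (2*r+1) := ⟨(i : ℕ) + 1, by have := i.isLt; omega⟩

/-- The upper-triangular maximal unipotent subgroup `N` of `U_{2r+1}`. -/
def inN (σ : E ≃+* E) (r : ℕ) (u : Mat E r) : Prop :=
  inU σ u ∧ (∀ i : Fin (2*r+1), u i i = 1) ∧
    ∀ i j : Fin (2*r+1), (j : ℕ) < (i : ℕ) → u i j = 0

def NSet (σ : E ≃+* E) (r : ℕ) : Set (Mat E r) := {u | inN σ r u}

/-- The diagonal maximal torus `A` of `U_{2r+1}`. -/
def inA (σ : E ≃+* E) (r : ℕ) (t : Mat E r) : Prop :=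
  inU σ t ∧ ∀ i j : Fin (2*r+1), i ≠ j → t i j = 0

/-- The upper-triangular Borel subgroup `B = AN` of `U_{2r+1}`. -/
def inB (σ : E ≃+* E) (r : ℕ) (b : Mat E r) : Prop :=
  inU σ b ∧ ∀ i j : Fin (2*r+1), (j : ℕ) < (i : ℕ) → b i j = 0

/-- The generic character `ψ_N(u) = ψ(u_{1,2} + ⋯ + u_{r,r+1})` of `N`. -/
def psiN (ψ : AddChar E ℂ) (r : ℕ) (u : Mat E r) : ℂ :=
  ψ (∑ i : Fin r, u (pL i) (pR i))

/-- The fractional ideal `𝔭_E^m = ϖ^m 𝔬_E` as a subset of `E`. -/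
def Pm (O : Subring E) (ϖ : E) (m : ℕ) : Set E := {x | ∃ y ∈ O, x = ϖ ^ m * y}

/-- The congruence subgroup `K_m^G = (I + Mat(𝔭_E^m)) ∩ G`. -/
def inK (σ : E ≃+* E) (O : Subring E) (ϖ : E) (r m : ℕ) (k : Mat E r) : Prop :=
  inU σ k ∧ ∀ i j : Fin (2*r+1), k i j - (1 : Mat E r) i j ∈ Pm O ϖ m

/-- The torus element
`e_m = diag(ϖ^{-2rm}, …, ϖ^{-2m}, 1, σ(ϖ)^{2m}, …, σ(ϖ)^{2rm})`. -/
def eMat (σ : E ≃+* E) (ϖ : E) (r m : ℕ) : Mat E r :=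
  Matrix.diagonal fun i : Fin (2*r+1) =>
    if (i : ℕ) ≤ r then (ϖ ^ (2*(r - (i : ℕ))*m))⁻¹ else (σ ϖ) ^ (2*((i : ℕ) - r)*m)

/-- The compact open subgroup `H_m = e_m K_m^G e_m⁻¹`. -/
def inH (σ : E ≃+* E) (O : Subring E) (ϖ : E) (r m : ℕ) (h : Mat E r) : Prop :=
  ∃ k, inK σ O ϖ r m k ∧ h = eMat σ ϖ r m * k * (eMat σ ϖ r m)⁻¹

/-- The character `τ_m(k) = ψ(ϖ^{-2m}(k_{1,2} + ⋯ + k_{r,r+1}))` of `K_m^G`. -/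
def taum (ψ : AddChar E ℂ) (ϖ : E) (r m : ℕ) (k : Mat E r) : ℂ :=
  ψ ((ϖ ^ (2*m))⁻¹ * ∑ i : Fin r, k (pL i) (pR i))

/-- The character `ψ_m(h) = τ_m(e_m⁻¹ h e_m)` of `H_m`. -/
def psim (σ : E ≃+* E) (ψ : AddChar E ℂ) (ϖ : E) (r m : ℕ) (h : Mat E r) : ℂ :=
  taum ψ ϖ r m ((eMat σ ϖ r m)⁻¹ * h * eMat σ ϖ r m)

/-- The subgroup `N_m = N ∩ H_m`. -/
def NmSet (σ : E ≃+* E) (O : Subring E) (ϖ : E) (r m : ℕ) : Set (Mat E r) :=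
  {u | inN σ r u ∧ inH σ O ϖ r m u}

/-- `ω` is a (multiplicative) character of the norm-one subgroup
`E¹ = {z : z σ(z) = 1}`. -/
def IsCharE1 (σ : E ≃+* E) (ω : E → ℂ) : Prop :=
  ω 1 = 1 ∧ ∀ z w : E, z * σ z = 1 → w * σ w = 1 → ω (z * w) = ω z * ω w

/-- The space `C^∞(G, ψ_N, ω)`: functions with `W(zug) = ω(z)ψ_N(u)W(g)` which are invariant
under right translation by some open compact subgroup (equivalently, by `K_C^G` for some `C ≥ 1`,
the subgroups `K_m^G` being a fundamental system). -/
def CinfWhittaker (σ : E ≃+* E) (O : Subring E) (ϖ : E) (ψ : AddChar E ℂ) (ω : E → ℂ)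
    (r : ℕ) (W : Mat E r → ℂ) : Prop :=
  (∀ z : E, z * σ z = 1 → ∀ u, inN σ r u → ∀ g : Mat E r,
      W (z • (u * g)) = ω z * (psiN ψ r u * W g)) ∧
  ∃ C : ℕ, 1 ≤ C ∧ ∀ (g k : Mat E r), inK σ O ϖ r C k → W (g * k) = W g

/-- `C` is an exponent of smoothness for `W`: `W` is invariant under right translation
by `K_C^G`. -/
def IsSmoothnessBound (σ : E ≃+* E) (O : Subring E) (ϖ : E) (r : ℕ)
    (W : Mat E r → ℂ) (C : ℕ) : Prop :=
  1 ≤ C ∧ ∀ (g k : Mat E r), inK σ O ϖ r C k → W (g * k) = W g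

end Defs

section TopMeas

instance matMeas (E : Type) [Field E] [MeasurableSpace E] (r : ℕ) :
    MeasurableSpace (Mat E r) :=
  show MeasurableSpace (Fin (2*r+1) → Fin (2*r+1) → E) from inferInstance

variable {E : Type} [Field E]

/-- The data of a `p`-adic field together with a quadratic-extension conjugation:
`σ` is a nontrivial involution, `O` is the (compact open) valuation ring of `E`, and `ϖ` is a
uniformizer (the nonunits of `O` are exactly `ϖ O`). -/
def LocalFieldData [TopologicalSpace E] (σ : E ≃+* E) (O : Subring E) (ϖ : E) : Prop :=
  Function.Involutive σ ∧ σ ≠ RingEquiv.refl E ∧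
  (∀ x : E, x ∈ O ∨ (x ≠ 0 ∧ x⁻¹ ∈ O)) ∧
  ϖ ∈ O ∧ ϖ ≠ 0 ∧
  (∀ x ∈ O, (∀ y ∈ O, x * y ≠ 1) → x ∈ Pm O ϖ 1) ∧
  IsOpen (O : Set E) ∧ IsCompact (O : Set E)

/-- `ψ` is a nontrivial unramified additive character: trivial on `𝔬_E` and nontrivial
on `ϖ⁻¹𝔬_E`. -/
def UnramifiedChar (O : Subring E) (ϖ : E) (ψ : AddChar E ℂ) : Prop :=
  (∀ x ∈ O, ψ x = 1) ∧ ∃ x ∈ O, ψ (ϖ⁻¹ * x) ≠ 1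

variable [MeasurableSpace E]

/-- `μ` is a (bi-invariant) Haar measure on the unipotent group `N`: it is concentrated on `N`,
invariant under left and right translation by elements of `N`, and gives the compact open
subgroups `N_m` finite positive volume. -/
def IsHaarOnN (σ : E ≃+* E) (O : Subring E) (ϖ : E) (r : ℕ) (μ : Measure (Mat E r)) : Prop :=
  μ {u | ¬ inN σ r u} = 0 ∧
  (∀ u, inN σ r u → ∀ s : Set (Mat E r), μ ((fun x => u * x) ⁻¹' s) = μ s) ∧
  (∀ u, inN σ r u → ∀ s : Set (Mat E r), μ ((fun x => x * u) ⁻¹' s) = μ s) ∧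
  ∀ m : ℕ, 1 ≤ m → μ (NmSet σ O ϖ r m) ≠ 0 ∧ μ (NmSet σ O ϖ r m) ≠ ⊤

/-- The Howe vector
`W_m(g) = vol(N_m)⁻¹ ∫_{N_m} ψ_m(u)⁻¹ W(gu) du`. -/
def howe (σ : E ≃+* E) (O : Subring E) (ϖ : E) (ψ : AddChar E ℂ) (r : ℕ)
    (μ : Measure (Mat E r)) (m : ℕ) (W : Mat E r → ℂ) (g : Mat E r) : ℂ :=
  (((μ (NmSet σ O ϖ r m)).toReal : ℂ))⁻¹ *
    ∫ u in NmSet σ O ϖ r m, (psim σ ψ ϖ r m u)⁻¹ * W (g * u) ∂μ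

/-- `W^f(g) = ∫_N ψ_N(u)⁻¹ f(ug) du`. -/
def WfInt (σ : E ≃+* E) (ψ : AddChar E ℂ) (r : ℕ) (μ : Measure (Mat E r))
    (f : Mat E r → ℂ) (g : Mat E r) : ℂ :=
  ∫ u in NSet σ r, (psiN ψ r u)⁻¹ * f (u * g) ∂μ

/-- The partial Bessel function
`B_m(g, f) = vol(N_m)⁻¹ ∫_N ∫_{N_m} ψ_N(u)⁻¹ ψ_m(u')⁻¹ f(u g u') du du'`. -/
def Bm (σ : E ≃+* E) (O : Subring E) (ϖ : E) (ψ : AddChar E ℂ) (r : ℕ)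
    (μ : Measure (Mat E r)) (m : ℕ) (f : Mat E r → ℂ) (g : Mat E r) : ℂ :=
  (((μ (NmSet σ O ϖ r m)).toReal : ℂ))⁻¹ *
    ∫ u in NSet σ r, (∫ u' in NmSet σ O ϖ r m,
      (psiN ψ r u)⁻¹ * ((psim σ ψ ϖ r m u')⁻¹ * f (u * g * u')) ∂μ) ∂μ

/-- The space `C_c^∞(Ω, ω)` of locally constant compactly supported functions supported in `Ω`
transforming by `ω` under the center `E¹`. -/
def CcInf [TopologicalSpace E] (σ : E ≃+* E) (ω : E → ℂ) (r : ℕ)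
    (Ω : Set (Mat E r)) (f : Mat E r → ℂ) : Prop :=
  IsLocallyConstant f ∧ HasCompactSupport f ∧ (∀ g, f g ≠ 0 → g ∈ Ω) ∧
  ∀ z : E, z * σ z = 1 → ∀ g : Mat E r, f (z • g) = ω z * f g

end TopMeas

section Weyl

variable {E : Type} [Field E]

/-- A matrix is monomial if it has exactly one nonzero entry in each row and column. -/
def IsMonomial {k : ℕ} (g : Matrix (Fin k) (Fin k) E) : Prop :=
  (∀ i : Fin k, ∃! j, g i j ≠ 0) ∧ (∀ j : Fin k, ∃! i, g i j ≠ 0)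

/-- Representatives of Weyl group elements: monomial matrices in `G`. -/
def inWeyl (σ : E ≃+* E) (r : ℕ) (w : Mat E r) : Prop := inU σ w ∧ IsMonomial w

/-- The Bruhat cell `C(w) = BwB`. -/
def BruhatCell (σ : E ≃+* E) (r : ℕ) (w : Mat E r) : Set (Mat E r) :=
  {g | ∃ b₁ b₂, inB σ r b₁ ∧ inB σ r b₂ ∧ g = b₁ * w * b₂}

variable [TopologicalSpace E]

/-- Bruhat order: `w₁ ≤ w₂` iff `C(w₁)` is contained in the closure of `C(w₂)`. -/
def bruhatLE (σ : E ≃+* E) (r : ℕ) (w₁ w₂ : Mat E r) : Prop :=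
  BruhatCell σ r w₁ ⊆ closure (BruhatCell σ r w₂)

/-- Strict Bruhat order on Weyl group elements (distinct cells). -/
def bruhatLT (σ : E ≃+* E) (r : ℕ) (w₁ w₂ : Mat E r) : Prop :=
  bruhatLE σ r w₁ w₂ ∧ BruhatCell σ r w₁ ≠ BruhatCell σ r w₂

/-- `Ω_w = ⋃_{w' ≥ w} C(w')`. -/
def OmegaSet (σ : E ≃+* E) (r : ℕ) (w : Mat E r) : Set (Mat E r) :=
  {g | ∃ w', inWeyl σ r w' ∧ bruhatLE σ r w w' ∧ g ∈ BruhatCell σ r w'}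

/-- `w` supports a Bessel function: for every simple root `α_i` (with root positions
`(i-1, i)`), if `wα_i` is positive then it is again simple.  For a monomial matrix this is
expressed via the positions of the nonzero entries in the relevant columns. -/
def inBG (σ : E ≃+* E) (r : ℕ) (w : Mat E r) : Prop :=
  inWeyl σ r w ∧ ∀ (i : Fin r) (k l : Fin (2*r+1)),
    w k (pL i) ≠ 0 → w l (pR i) ≠ 0 → (k : ℕ) < (l : ℕ) → (l : ℕ) = (k : ℕ) + 1

/-- `θ_w ⊆ Δ`: the set of simple roots `α_{i+1}` (0-based `i`) with `wα_{i+1} > 0`. -/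
def thetaSet (r : ℕ) (w : Mat E r) : Set (Fin r) :=
  {i | ∃ k l : Fin (2*r+1), w k (pL i) ≠ 0 ∧ w l (pR i) ≠ 0 ∧ (k : ℕ) < (l : ℕ)}

/-- `A_w = {a ∈ A : α(a) = 1 for all α ∈ θ_w}`. -/
def inAw (σ : E ≃+* E) (r : ℕ) (w : Mat E r) (a : Mat E r) : Prop :=
  inA σ r a ∧ ∀ i ∈ thetaSet r w, a (pL i) (pL i) = a (pR i) (pR i)

/-- A Bessel chain of length `m` from `w'` up to `w` inside `B(G)`. -/
def besselChain (σ : E ≃+* E) (r : ℕ) (w w' : Mat E r) (m : ℕ) : Prop :=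
  ∃ c : ℕ → Mat E r, c 0 = w' ∧ c m = w ∧ (∀ j, j ≤ m → inBG σ r (c j)) ∧
    ∀ j, j < m → bruhatLT σ r (c j) (c (j+1))

/-- `d_B(w, w') = d`: the Bessel distance between `w` and `w'` equals `d`. -/
def besselDistEq (σ : E ≃+* E) (r : ℕ) (w w' : Mat E r) (d : ℕ) : Prop :=
  besselChain σ r w w' d ∧ ∀ m, besselChain σ r w w' m → m ≤ d

end Weyl

section Elements

variable {E : Type} [Field E]

/-- `X* = J_r ᵗX̄⁻¹ J_r`. -/
def starMat (σ : E ≃+* E) {k : ℕ} (X : Matrix (Fin k) (Fin k) E) : Matrix (Fin k) (Fin k) E :=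
  Jmat E k * ((mconj σ X)ᵀ)⁻¹ * Jmat E k

/-- `X^∧ = diag(X, 1, X*)` for `X ∈ GL_r(E)`. -/
def hat (σ : E ≃+* E) {r : ℕ} (X : Matrix (Fin r) (Fin r) E) : Mat E r :=
  fun i j =>
    if h : (i : ℕ) < r ∧ (j : ℕ) < r then X ⟨(i : ℕ), h.1⟩ ⟨(j : ℕ), h.2⟩
    else if h2 : r < (i : ℕ) ∧ r < (j : ℕ) then
      starMat σ X ⟨(i : ℕ) - (r+1), by have := i.isLt; omega⟩
        ⟨(j : ℕ) - (r+1), by have := j.isLt; omega⟩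
    else if (i : ℕ) = r ∧ (j : ℕ) = r then 1 else 0

/-- The Weyl element `w̃_n = [[0,0,I_n],[0,I_{2(r-n)+1},0],[I_n,0,0]]`. -/
def wtilde (E : Type) [Field E] (r n : ℕ) : Mat E r := fun i j =>
  if (i : ℕ) < n then (if (j : ℕ) = (i : ℕ) + (2*r+1-n) then 1 else 0)
  else if (i : ℕ) < 2*r+1-n then (if j = i then 1 else 0)
  else (if (j : ℕ) + (2*r+1-n) = (i : ℕ) then 1 else 0)

/-- `t_n(a) = diag(a, I_{r-n})^∧` for `a ∈ GL_n(E)`. -/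
def tnMat (σ : E ≃+* E) (r n : ℕ) (a : Matrix (Fin n) (Fin n) E) : Mat E r :=
  hat σ (fun i j : Fin r =>
    if h : (i : ℕ) < n ∧ (j : ℕ) < n then a ⟨(i : ℕ), h.1⟩ ⟨(j : ℕ), h.2⟩
    else if i = j then 1 else 0)

/-- The standard parabolic subgroup `P_n` of `G` with Levi
`L_n = E¹·{diag(a, a_{n+1}, …, a_r)^∧}`: block upper triangular matrices in `G` for the
partition `(n, 1, …, 1)` of the first `r` indices. -/
def inPn (σ : E ≃+* E) (r n : ℕ) (g : Mat E r) : Prop :=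
  inU σ g ∧ ∀ i j : Fin (2*r+1), (j : ℕ) < (i : ℕ) → ¬((i : ℕ) < n ∧ (j : ℕ) < n) → g i j = 0

/-- The subset `P_n w̃_n P_n` of `G`. -/
def PnwPn (σ : E ≃+* E) (r n : ℕ) : Set (Mat E r) :=
  {g | ∃ p₁ p₂, inPn σ r n p₁ ∧ inPn σ r n p₂ ∧ g = p₁ * wtilde E r n * p₂}

/-- `S_n^- = {[[I_n, x, y], [0, I_{2r-2n+1}, x'], [0, 0, I_n]] ∈ G}`. -/
def inSnMinus (σ : E ≃+* E) (r n : ℕ) (g : Mat E r) : Prop :=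
  inU σ g ∧ (∀ i : Fin (2*r+1), g i i = 1) ∧
  (∀ i j : Fin (2*r+1), (j : ℕ) < (i : ℕ) → g i j = 0) ∧
  (∀ i j : Fin (2*r+1), (i : ℕ) < (j : ℕ) →
    ((j : ℕ) < n ∨ (n ≤ (i : ℕ) ∧ (j : ℕ) < 2*r+1-n) ∨ 2*r+1-n ≤ (i : ℕ)) → g i j = 0)

/-- The block-diagonal matrix `diag(J_n, I_{r-n})` of size `r`. -/
def JIblock (E : Type) [Field E] (r n : ℕ) : Matrix (Fin r) (Fin r) E := fun i j =>
  if (i : ℕ) < n then (if (i : ℕ) + (j : ℕ) + 1 = n then 1 else 0)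
  else (if j = i then 1 else 0)

/-- The longest Weyl element `w_ℓ^{L_n}` of the Levi `L_n`: `diag(J_n, I_{r-n})^∧`. -/
def wlLn (σ : E ≃+* E) (r n : ℕ) : Mat E r := hat σ (JIblock E r n)

/-- `w_max = w_ℓ^{L_n} w̃_n`. -/
def wmax (σ : E ≃+* E) (r n : ℕ) : Mat E r := wlLn σ r n * wtilde E r n

/-- The matrix `diag(I_n, J_{2r-2n+1}, I_n)`. -/
def midJ (E : Type) [Field E] (r n : ℕ) : Mat E r := fun i j =>
  if (i : ℕ) < n ∨ 2*r+1-n ≤ (i : ℕ) then (if j = i then 1 else 0)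
  else (if (i : ℕ) + (j : ℕ) = 2*r then 1 else 0)

/-- `w_{1,r-1} = ([[0,1],[I_{r-1},0]])^∧`. -/
def w1r1 (σ : E ≃+* E) (r : ℕ) : Mat E r :=
  hat σ (fun i j : Fin r =>
    if (i : ℕ) = 0 then (if (j : ℕ) = r - 1 then 1 else 0)
    else (if (j : ℕ) + 1 = (i : ℕ) then 1 else 0))

/-- `j(g) = w_{1,r-1} g w_{1,r-1}⁻¹`. -/
def jconj (σ : E ≃+* E) (r : ℕ) (g : Mat E r) : Mat E r :=
  w1r1 σ r * g * (w1r1 σ r)⁻¹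

/-- `[[I_{r-1}, x], [0, 1]]` for a column vector `x`. -/
def colU (E : Type) [Field E] (r : ℕ) (x : Fin (r-1) → E) : Matrix (Fin r) (Fin r) E :=
  fun i j =>
    if i = j then 1
    else if h : (i : ℕ) < r - 1 ∧ (j : ℕ) = r - 1 then x ⟨(i : ℕ), h.1⟩ else 0

/-- `t_1(a) = diag(a, I_{r-1})^∧` for `a ∈ E^×`. -/
def t1Mat (σ : E ≃+* E) (r : ℕ) (a : E) : Mat E r :=
  hat σ (Matrix.diagonal fun i : Fin r => if (i : ℕ) = 0 then a else 1)

/-- Upper-triangular unipotent matrices (the subgroup `Z_n` of `GL_n(E)`). -/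
def UpperUni {n : ℕ} (z : Matrix (Fin n) (Fin n) E) : Prop :=
  (∀ i : Fin n, z i i = 1) ∧ ∀ i j : Fin n, (j : ℕ) < (i : ℕ) → z i j = 0

end Elements

section MoreElements

variable {E : Type} [Field E]

/-- The torus element `diag(a₁, …, a_r, 1, σ(a_r)⁻¹, …, σ(a₁)⁻¹)`. -/
def torusMat (σ : E ≃+* E) (r : ℕ) (a : Fin r → E) : Mat E r :=
  Matrix.diagonal fun i : Fin (2*r+1) =>
    if h : (i : ℕ) < r then a ⟨(i : ℕ), h⟩
    else if h2 : (i : ℕ) = r then 1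
    else (σ (a ⟨2*r - (i : ℕ), by have := i.isLt; omega⟩))⁻¹

/-- The matrix `diag(J_n, J_{2(r-n)+1}, J_n)`. -/
def blockJ3 (E : Type) [Field E] (r n : ℕ) : Mat E r := fun i j =>
  if (i : ℕ) < n ∧ (j : ℕ) < n then (if (i : ℕ) + (j : ℕ) + 1 = n then 1 else 0)
  else if n ≤ (i : ℕ) ∧ (i : ℕ) < 2*r+1-n ∧ n ≤ (j : ℕ) ∧ (j : ℕ) < 2*r+1-n then
    (if (i : ℕ) + (j : ℕ) = 2*r then 1 else 0)
  else if 2*r+1-n ≤ (i : ℕ) ∧ 2*r+1-n ≤ (j : ℕ) then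
    (if (i : ℕ) + (j : ℕ) + 1 = 4*r+2-n then 1 else 0)
  else 0

end MoreElements

section Stability

variable {E : Type} [Field E] [TopologicalSpace E]

/-- A subset of `G` stable under left and right multiplication by `N` and by `A`. -/
def NAStable (σ : E ≃+* E) (r : ℕ) (Ω : Set (Mat E r)) : Prop :=
  ∀ g ∈ Ω, (∀ u, inN σ r u → u * g ∈ Ω ∧ g * u ∈ Ω) ∧
    (∀ a, inA σ r a → a * g ∈ Ω ∧ g * a ∈ Ω)

end Stability

section AuxProof

open Finset

variable {E : Type} [Field E]

private lemma mconj_mul' (σ : E ≃+* E) {k : ℕ} (A B : Matrix (Fin k) (Fin k) E) :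
    mconj σ (A * B) = mconj σ A * mconj σ B := by
  ext i j
  simp [mconj, Matrix.mul_apply, map_sum]

private lemma mconj_one' (σ : E ≃+* E) {k : ℕ} :
    mconj σ (1 : Matrix (Fin k) (Fin k) E) = 1 := by
  ext i j
  by_cases h : i = j <;> simp [mconj, Matrix.one_apply, h]

private lemma inU_one' (σ : E ≃+* E) {k : ℕ} : inU σ (1 : Matrix (Fin k) (Fin k) E) := by
  constructor
  · rw [mconj_one', Matrix.transpose_one, Matrix.mul_one, Matrix.one_mul]
  · exact isUnit_one

private lemma inU_mul' (σ : E ≃+* E) {k : ℕ} {A B : Matrix (Fin k) (Fin k) E}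
    (hA : inU σ A) (hB : inU σ B) : inU σ (A * B) := by
  refine ⟨?_, hA.2.mul hB.2⟩
  have h : (mconj σ (A * B))ᵀ * Jmat E k * (A * B)
      = (mconj σ B)ᵀ * (((mconj σ A)ᵀ * Jmat E k * A) * B) := by
    rw [mconj_mul', Matrix.transpose_mul]
    simp only [Matrix.mul_assoc]
  rw [h, hA.1, ← Matrix.mul_assoc, hB.1]

private lemma inB_one' (σ : E ≃+* E) (r : ℕ) : inB σ r (1 : Mat E r) := by
  refine ⟨inU_one' σ, ?_⟩
  intro i j hij
  exact Matrix.one_apply_ne (by intro h; subst h; omega)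

private lemma inN_inPn' {σ : E ≃+* E} {r n : ℕ} {u : Mat E r} (hu : inN σ r u) :
    inPn σ r n u := ⟨hu.1, fun i j hij _ => hu.2.2 i j hij⟩

private lemma inPn_mul' {σ : E ≃+* E} {r n : ℕ} {p q : Mat E r}
    (hp : inPn σ r n p) (hq : inPn σ r n q) : inPn σ r n (p * q) := by
  refine ⟨inU_mul' σ hp.1 hq.1, ?_⟩
  intro i j hij hblock
  have hin : ¬ ((i : ℕ) < n) := by omega
  rw [Matrix.mul_apply]
  refine Finset.sum_eq_zero fun k _ => ?_
  by_cases hk : (k : ℕ) < (i : ℕ)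
  · rw [hp.2 i k hk (by omega), zero_mul]
  · rw [hq.2 k j (by omega) (by omega), mul_zero]

/-- Row-embedding of the bottom-left `i × i` corner. -/
private def eRf (r i : ℕ) (hi : i ≤ r) (a : Fin i) : Fin (2*r+1) :=
  ⟨(a : ℕ) + (2*r+1-i), by have := a.isLt; omega⟩

/-- Column-embedding of the bottom-left `i × i` corner. -/
private def eCf (r i : ℕ) (hi : i ≤ r) (c : Fin i) : Fin (2*r+1) :=
  ⟨(c : ℕ), by have := c.isLt; omega⟩

private lemma sum_eRf {β : Type} [AddCommMonoid β] {r i : ℕ} (hi : i ≤ r)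
    (f : Fin (2*r+1) → β) (hf : ∀ k : Fin (2*r+1), (k : ℕ) < 2*r+1-i → f k = 0) :
    ∑ k, f k = ∑ a : Fin i, f (eRf r i hi a) := by
  have hinj : ∀ a ∈ Finset.univ, ∀ b ∈ Finset.univ,
      eRf r i hi a = eRf r i hi b → a = b := by
    intro a _ b _ hab
    have h := congrArg Fin.val hab
    simp only [eRf] at h
    exact Fin.ext (by omega)
  rw [← Finset.sum_image (g := eRf r i hi) (f := f) hinj]
  refine (Finset.sum_subset (Finset.subset_univ _) ?_).symm
  intro k _ hk
  refine hf k ?_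
  by_contra hlt
  push_neg at hlt
  have hklt := k.isLt
  exact hk (Finset.mem_image.mpr ⟨⟨(k : ℕ) - (2*r+1-i), by omega⟩,
    Finset.mem_univ _, Fin.ext (by simp only [eRf]; omega)⟩)

private lemma sum_eCf {β : Type} [AddCommMonoid β] {r i : ℕ} (hi : i ≤ r)
    (f : Fin (2*r+1) → β) (hf : ∀ l : Fin (2*r+1), i ≤ (l : ℕ) → f l = 0) :
    ∑ l, f l = ∑ c : Fin i, f (eCf r i hi c) := by
  have hinj : ∀ a ∈ Finset.univ, ∀ b ∈ Finset.univ,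
      eCf r i hi a = eCf r i hi b → a = b := by
    intro a _ b _ hab
    have h := congrArg Fin.val hab
    simp only [eCf] at h
    exact Fin.ext (by omega)
  rw [← Finset.sum_image (g := eCf r i hi) (f := f) hinj]
  refine (Finset.sum_subset (Finset.subset_univ _) ?_).symm
  intro l _ hl
  refine hf l ?_
  by_contra hlt
  push_neg at hlt
  exact hl (Finset.mem_image.mpr ⟨⟨(l : ℕ), hlt⟩,
    Finset.mem_univ _, Fin.ext (by simp only [eCf])⟩)

private lemma corner_mul_left' {r i : ℕ} (hi : i ≤ r) (b M : Mat E r)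
    (hb : ∀ (a : Fin i) (k : Fin (2*r+1)), (k : ℕ) < 2*r+1-i → b (eRf r i hi a) k = 0) :
    (b * M).submatrix (eRf r i hi) (eCf r i hi)
      = b.submatrix (eRf r i hi) (eRf r i hi) * M.submatrix (eRf r i hi) (eCf r i hi) := by
  ext a c
  simp only [Matrix.submatrix_apply, Matrix.mul_apply]
  exact sum_eRf hi (fun k => b (eRf r i hi a) k * M k (eCf r i hi c))
    (fun k hk => mul_eq_zero_of_left (hb a k hk) _)

private lemma corner_mul_right' {r i : ℕ} (hi : i ≤ r) (M b : Mat E r)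
    (hb : ∀ (c : Fin i) (l : Fin (2*r+1)), i ≤ (l : ℕ) → b l (eCf r i hi c) = 0) :
    (M * b).submatrix (eRf r i hi) (eCf r i hi)
      = M.submatrix (eRf r i hi) (eCf r i hi) * b.submatrix (eCf r i hi) (eCf r i hi) := by
  ext a c
  simp only [Matrix.submatrix_apply, Matrix.mul_apply]
  exact sum_eCf hi (fun l => M (eRf r i hi a) l * b l (eCf r i hi c))
    (fun l hl => mul_eq_zero_of_right _ (hb c l hl))

private lemma diag_ne_of_inB {σ : E ≃+* E} {r : ℕ} {b : Mat E r} (hb : inB σ r b)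
    (k : Fin (2*r+1)) : b k k ≠ 0 := by
  have hdet : b.det ≠ 0 := ((Matrix.isUnit_iff_isUnit_det b).mp hb.1.2).ne_zero
  have htri : b.det = ∏ j, b j j :=
    Matrix.det_of_upperTriangular (fun i j hij => hb.2 i j hij)
  rw [htri] at hdet
  exact Finset.prod_ne_zero_iff.mp hdet k (Finset.mem_univ k)

private lemma det_subRR' {σ : E ≃+* E} {r i : ℕ} (hi : i ≤ r) {b : Mat E r}
    (hb : inB σ r b) : (b.submatrix (eRf r i hi) (eRf r i hi)).det ≠ 0 := by
  have htri : (b.submatrix (eRf r i hi) (eRf r i hi)).det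
      = ∏ a, b (eRf r i hi a) (eRf r i hi a) := by
    refine Matrix.det_of_upperTriangular ?_
    intro a a' haa
    refine hb.2 _ _ ?_
    have h' : (a' : ℕ) < (a : ℕ) := haa
    simp only [eRf]
    omega
  rw [htri]
  exact Finset.prod_ne_zero_iff.mpr fun a _ => diag_ne_of_inB hb _

private lemma det_subCC' {σ : E ≃+* E} {r i : ℕ} (hi : i ≤ r) {b : Mat E r}
    (hb : inB σ r b) : (b.submatrix (eCf r i hi) (eCf r i hi)).det ≠ 0 := by
  have htri : (b.submatrix (eCf r i hi) (eCf r i hi)).det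
      = ∏ c, b (eCf r i hi c) (eCf r i hi c) := by
    refine Matrix.det_of_upperTriangular ?_
    intro a a' haa
    refine hb.2 _ _ ?_
    have h' : (a' : ℕ) < (a : ℕ) := haa
    simp only [eCf]
    omega
  rw [htri]
  exact Finset.prod_ne_zero_iff.mpr fun a _ => diag_ne_of_inB hb _

private lemma corner_det_bwb {σ : E ≃+* E} {r i : ℕ} (hi : i ≤ r) {b₁ b₂ : Mat E r}
    (hb₁ : inB σ r b₁) (hb₂ : inB σ r b₂) (w : Mat E r) :
    ((b₁ * w * b₂).submatrix (eRf r i hi) (eCf r i hi)).det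
      = (b₁.submatrix (eRf r i hi) (eRf r i hi)).det *
        ((w.submatrix (eRf r i hi) (eCf r i hi)).det *
         (b₂.submatrix (eCf r i hi) (eCf r i hi)).det) := by
  have h1 : b₁ * w * b₂ = b₁ * (w * b₂) := by rw [Matrix.mul_assoc]
  rw [h1,
    corner_mul_left' hi _ _ (fun a k hk => hb₁.2 _ _ (by simp only [eRf]; omega)),
    corner_mul_right' hi _ _ (fun c l hl => by
      have hc := c.isLt
      exact hb₂.2 _ _ (by simp only [eCf]; omega)),
    Matrix.det_mul, Matrix.det_mul]

private lemma corner_det_pwp {σ : E ≃+* E} {r n i : ℕ} (hn1 : 1 ≤ n) (hni : n + 1 ≤ i)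
    (hi : i ≤ r) {p₁ p₂ : Mat E r} (hp₁ : inPn σ r n p₁) (hp₂ : inPn σ r n p₂) :
    ((p₁ * wtilde E r n * p₂).submatrix (eRf r i hi) (eCf r i hi)).det = 0 := by
  have hn : n ≤ r := by omega
  have h1 : p₁ * wtilde E r n * p₂ = p₁ * (wtilde E r n * p₂) := by rw [Matrix.mul_assoc]
  rw [h1,
    corner_mul_left' hi _ _ (fun a k hk =>
      hp₁.2 _ _ (by simp only [eRf]; omega) (by simp only [eRf]; omega)),
    corner_mul_right' hi _ _ (fun c l hl => by
      have hc := c.isLt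
      exact hp₂.2 _ _ (by simp only [eCf]; omega) (by simp only [eCf]; omega)),
    Matrix.det_mul, Matrix.det_mul]
  have hrow : ∀ c : Fin i,
      (wtilde E r n).submatrix (eRf r i hi) (eCf r i hi) ⟨0, by omega⟩ c = 0 := by
    intro c
    have hc := c.isLt
    simp only [Matrix.submatrix_apply, wtilde]
    unfold eRf eCf
    dsimp only
    rw [if_neg (by omega), if_pos (by omega), if_neg ?_]
    intro hEq
    have h := congrArg Fin.val hEq
    simp only at h
    omega
  have hz := Matrix.det_eq_zero_of_row_eq_zero (⟨0, by omega⟩ : Fin i) hrow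
  rw [hz]
  ring

private lemma corner_wtilde_self {r i : ℕ} (hi1 : 1 ≤ i) (hi : i ≤ r) :
    ((wtilde E r i).submatrix (eRf r i hi) (eCf r i hi)).det = 1 := by
  have h : (wtilde E r i).submatrix (eRf r i hi) (eCf r i hi) = 1 := by
    ext a c
    have ha := a.isLt; have hc := c.isLt
    simp only [Matrix.submatrix_apply, wtilde]
    unfold eRf eCf
    dsimp only
    rw [if_neg (by omega), if_neg (by omega), Matrix.one_apply]
    by_cases hac : a = c
    · subst hac
      rw [if_pos rfl, if_pos rfl]
    · rw [if_neg (fun h' => hac (Fin.ext (by omega))), if_neg hac]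
  rw [h, Matrix.det_one]

private lemma disjoint_core [TopologicalSpace E] [IsTopologicalRing E]
    (σ : E ≃+* E) (r n i : ℕ) (hn1 : 1 ≤ n) (hni : n + 1 ≤ i) (hi : i ≤ r)
    (hcl : IsClosed ({(0 : E)} : Set E)) :
    PnwPn σ r n ∩ OmegaSet σ r (wtilde E r i) = ∅ := by
  rw [Set.eq_empty_iff_forall_notMem]
  rintro g ⟨⟨p₁, p₂, hp₁, hp₂, hgP⟩, ⟨w', hw', hle, b₁, b₂, hb₁, hb₂, hgB⟩⟩
  have hD0 : ((g).submatrix (eRf r i hi) (eCf r i hi)).det = 0 := by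
    rw [hgP]
    exact corner_det_pwp hn1 hni hi hp₁ hp₂
  have hDcont : Continuous fun M : Mat E r =>
      ((M.submatrix (eRf r i hi) (eCf r i hi)).det) := by
    apply Continuous.matrix_det
    exact continuous_pi fun a => continuous_pi fun c =>
      (continuous_apply (eCf r i hi c)).comp (continuous_apply (eRf r i hi a))
  have hclosed : IsClosed {M : Mat E r | ((M.submatrix (eRf r i hi) (eCf r i hi)).det) = 0} :=
    hcl.preimage hDcont
  have hDw' : ((w'.submatrix (eRf r i hi) (eCf r i hi)).det) ≠ 0 := by
    intro h0
    have hsub : BruhatCell σ r w'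
        ⊆ {M : Mat E r | ((M.submatrix (eRf r i hi) (eCf r i hi)).det) = 0} := by
      rintro x ⟨c₁, c₂, hc₁, hc₂, rfl⟩
      show ((c₁ * w' * c₂).submatrix (eRf r i hi) (eCf r i hi)).det = 0
      rw [corner_det_bwb hi hc₁ hc₂, h0]
      ring
    have hclsub := closure_minimal hsub hclosed
    have hwt : wtilde E r i ∈ BruhatCell σ r (wtilde E r i) :=
      ⟨1, 1, inB_one' σ r, inB_one' σ r, by rw [Matrix.one_mul, Matrix.mul_one]⟩
    have hmem := hclsub (hle hwt)
    simp only [Set.mem_setOf_eq] at hmem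
    rw [corner_wtilde_self (by omega) hi] at hmem
    exact one_ne_zero hmem
  have hne : ((g).submatrix (eRf r i hi) (eCf r i hi)).det ≠ 0 := by
    rw [hgB, corner_det_bwb hi hb₁ hb₂]
    exact mul_ne_zero (det_subRR' hi hb₁) (mul_ne_zero hDw' (det_subCC' hi hb₂))
  exact hne hD0

private lemma zero_closed' [TopologicalSpace E] [IsTopologicalRing E]
    {σ : E ≃+* E} {O : Subring E} {ϖ : E} (hEF : LocalFieldData σ O ϖ)
    {ψ : AddChar E ℂ} (hψ : UnramifiedChar O ϖ ψ) :
    IsClosed ({(0 : E)} : Set E) := by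
  obtain ⟨htriv, x, hxO, hxne⟩ := hψ
  have hpi : ϖ⁻¹ ∉ O := fun h => hxne (htriv _ (O.mul_mem h hxO))
  have hOopen : IsOpen (O : Set E) := hEF.2.2.2.2.2.2.1
  have hsub : closure ({(0 : E)} : Set E) ⊆ (O : Set E) := by
    intro y hy
    have hU : IsOpen {z : E | y - z ∈ O} :=
      hOopen.preimage (continuous_const.sub continuous_id)
    obtain ⟨z, hzU, hz0⟩ := mem_closure_iff.mp hy _ hU
      (by simp only [Set.mem_setOf_eq, sub_self]; exact O.zero_mem)
    simp only [Set.mem_singleton_iff] at hz0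
    subst hz0
    simpa using hzU
  have hmain : closure ({(0 : E)} : Set E) = {0} := by
    refine Set.Subset.antisymm ?_ subset_closure
    intro y hy
    rcases eq_or_ne y 0 with h | h
    · simp [h]
    · exfalso
      have hmem : (ϖ⁻¹ * y⁻¹) * y ∈ closure ({(0 : E)} : Set E) :=
        map_mem_closure (continuous_mul_left _) hy (by
          intro z hz
          simp only [Set.mem_singleton_iff] at hz ⊢
          rw [hz, mul_zero])
      rw [mul_assoc, inv_mul_cancel₀ h, mul_one] at hmem
      exact hpi (hsub hmem)
  rw [← hmain]
  exact isClosed_closure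

end AuxProof

/-- For `1 ≤ n ≤ r` and `n+1 ≤ i ≤ r`, `P_n w̃_n P_n ∩ Ω_{w̃_i} = ∅`;
consequently `B_m(g, f) = 0` for every `f ∈ C_c^∞(Ω_{w̃_i}, ω)`, every `m ≥ 1` and every
`g ∈ P_n w̃_n P_n`. -/
theorem PnwPn_disjoint_Omega
    {E : Type} [Field E] [TopologicalSpace E] [IsTopologicalRing E] [MeasurableSpace E]
    (r : ℕ) (hr : 1 ≤ r)
    (σ : E ≃+* E) (O : Subring E) (ϖ : E) (hEF : LocalFieldData σ O ϖ)
    (ψ : AddChar E ℂ) (hψ : UnramifiedChar O ϖ ψ)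
    (ω : E → ℂ) (hω : IsCharE1 σ ω)
    (μ : Measure (Mat E r)) (hμ : IsHaarOnN σ O ϖ r μ)
    (n : ℕ) (hn1 : 1 ≤ n) (hnr : n ≤ r) :
    (∀ i : ℕ, n + 1 ≤ i → i ≤ r →
      PnwPn σ r n ∩ OmegaSet σ r (wtilde E r i) = ∅) ∧
    (∀ i : ℕ, n + 1 ≤ i → i ≤ r →
      ∀ f : Mat E r → ℂ, CcInf σ ω r (OmegaSet σ r (wtilde E r i)) f →
        ∀ m : ℕ, 1 ≤ m → ∀ g ∈ PnwPn σ r n, Bm σ O ϖ ψ r μ m f g = 0) := by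
  have hcl : IsClosed ({(0 : E)} : Set E) := zero_closed' hEF hψ
  have hdisj : ∀ i : ℕ, n + 1 ≤ i → i ≤ r →
      PnwPn σ r n ∩ OmegaSet σ r (wtilde E r i) = ∅ :=
    fun i h1 h2 => disjoint_core σ r n i hn1 h1 h2 hcl
  refine ⟨hdisj, ?_⟩
  intro i h1 h2 f hf m hm g hg
  obtain ⟨p₁, p₂, hp₁, hp₂, rfl⟩ := hg
  have hNnull : μ {u | ¬ inN σ r u} = 0 := hμ.1
  have key : ∀ u u' : Mat E r, inN σ r u → inN σ r u' →
      f (u * (p₁ * wtilde E r n * p₂) * u') = 0 := by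
    intro u u' hu hu'
    by_contra hne
    have hΩ := hf.2.2.1 _ hne
    have hP : u * (p₁ * wtilde E r n * p₂) * u' ∈ PnwPn σ r n :=
      ⟨u * p₁, p₂ * u', inPn_mul' (inN_inPn' hu) hp₁, inPn_mul' hp₂ (inN_inPn' hu'),
        by noncomm_ring⟩
    exact Set.eq_empty_iff_forall_notMem.mp (hdisj i h1 h2) _ ⟨hP, hΩ⟩
  have inner0 : ∀ u : Mat E r, inN σ r u →
      (∫ u' in NmSet σ O ϖ r m, (psiN ψ r u)⁻¹ *
        ((psim σ ψ ϖ r m u')⁻¹ * f (u * (p₁ * wtilde E r n * p₂) * u')) ∂μ) = 0 := by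
    intro u hu
    apply MeasureTheory.integral_eq_zero_of_ae
    have h1 : (fun u' : Mat E r => (psiN ψ r u)⁻¹ *
        ((psim σ ψ ϖ r m u')⁻¹ * f (u * (p₁ * wtilde E r n * p₂) * u')))
        =ᵐ[μ] 0 := by
      rw [Filter.EventuallyEq, MeasureTheory.ae_iff]
      refine measure_mono_null (fun u' h' => ?_) hNnull
      simp only [Set.mem_setOf_eq, Pi.zero_apply] at h' ⊢
      intro hu'
      exact h' (by rw [key u u' hu hu', mul_zero, mul_zero])
    exact h1.filter_mono (MeasureTheory.ae_mono MeasureTheory.Measure.restrict_le_self)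
  have outer0 : (∫ u in NSet σ r, (∫ u' in NmSet σ O ϖ r m,
      (psiN ψ r u)⁻¹ * ((psim σ ψ ϖ r m u')⁻¹ *
        f (u * (p₁ * wtilde E r n * p₂) * u')) ∂μ) ∂μ) = 0 := by
    apply MeasureTheory.integral_eq_zero_of_ae
    have h1 : (fun u : Mat E r => (∫ u' in NmSet σ O ϖ r m,
        (psiN ψ r u)⁻¹ * ((psim σ ψ ϖ r m u')⁻¹ *
          f (u * (p₁ * wtilde E r n * p₂) * u')) ∂μ)) =ᵐ[μ] 0 := by
      rw [Filter.EventuallyEq, MeasureTheory.ae_iff]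
      refine measure_mono_null (fun u h' => ?_) hNnull
      simp only [Set.mem_setOf_eq, Pi.zero_apply] at h' ⊢
      intro hu
      exact h' (inner0 u hu)
    exact h1.filter_mono (MeasureTheory.ae_mono MeasureTheory.Measure.restrict_le_self)
  unfold Bm
  rw [outer0, mul_zero]
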